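/- Let φ₂(z; Ω) denote the bivariate normal density with mean 0 and correlation matrix Ω = [[1, ρ], [ρ, 1]] with |ρ| < 1, let Φ be the standard normal CDF, and let α ∈ ℝ. Then ∫_{ℝ²} 2 φ₂(z; Ω) Φ(α(z₁² - z₂²)) dz = 1. -/

import Mathlib

open MeasureTheory Set Real

/-- The function `z ↦ 2 φ₂(z; Ω) Φ(α(z₁² - z₂²))`, with `φ₂(·;Ω)` the bivariate
normal density with correlation `ρ` and `Φ` the standard normal CDF, integrates
to 1 (density (9) of the paper). -/
theorem sn_diff_squares_integral
    (ρ α : ℝ) (hρ : |ρ| < 1)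
    (φ₂ : ℝ × ℝ → ℝ)
    (hφ₂ : ∀ z : ℝ × ℝ, φ₂ z =
      (2 * π * Real.sqrt (1 - ρ ^ 2))⁻¹ *
        Real.exp (-(z.1 ^ 2 - 2 * ρ * z.1 * z.2 + z.2 ^ 2) / (2 * (1 - ρ ^ 2))))
    (Φ : ℝ → ℝ)
    (hΦ : ∀ x, Φ x = ∫ t in Iic x, (Real.sqrt (2 * π))⁻¹ * Real.exp (-t ^ 2 / 2)) :
    ∫ z : ℝ × ℝ, 2 * φ₂ z * Φ (α * (z.1 ^ 2 - z.2 ^ 2)) = 1 := by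
  have hs : (0:ℝ) < 1 - ρ ^ 2 := by nlinarith [sq_abs ρ, abs_nonneg ρ]
  set s : ℝ := 1 - ρ ^ 2 with hsdef
  have hπ : (0:ℝ) < π := Real.pi_pos
  have hsqrt_s : (0:ℝ) < Real.sqrt s := Real.sqrt_pos.2 hs
  set c : ℝ := (2 * π * Real.sqrt s)⁻¹ with hcdef
  have hc : 0 < c := by positivity
  -- the standard normal density
  set g : ℝ → ℝ := fun t => (Real.sqrt (2 * π))⁻¹ * Real.exp (-t ^ 2 / 2) with hgdef
  have hg_eq : ∀ t, g t = (Real.sqrt (2 * π))⁻¹ * Real.exp (-(2⁻¹ : ℝ) * t ^ 2) := by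
    intro t; simp only [hgdef]; ring_nf
  have hg_int : Integrable g := by
    have := (integrable_exp_neg_mul_sq (show (0:ℝ) < 2⁻¹ by norm_num)).const_mul
      ((Real.sqrt (2 * π))⁻¹)
    exact this.congr (Filter.Eventually.of_forall fun t => (hg_eq t).symm)
  have hg_nonneg : ∀ t, 0 ≤ g t := fun t => by positivity
  have hg_total : ∫ t, g t = 1 := by
    have h1 : ∫ t : ℝ, Real.exp (-(2⁻¹:ℝ) * t ^ 2) = Real.sqrt (π / 2⁻¹) :=
      integral_gaussian (2⁻¹ : ℝ)
    have : ∫ t, g t = (Real.sqrt (2 * π))⁻¹ * Real.sqrt (π / 2⁻¹) := by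
      rw [show (fun t => g t) = fun t => (Real.sqrt (2 * π))⁻¹ * Real.exp (-(2⁻¹:ℝ) * t ^ 2) from
        funext hg_eq, integral_const_mul, h1]
    rw [this, show π / 2⁻¹ = 2 * π by ring]
    rw [inv_mul_cancel₀ (by positivity)]
  -- Φ facts
  have hΦ_nonneg : ∀ x, 0 ≤ Φ x := by
    intro x; rw [hΦ]
    exact setIntegral_nonneg measurableSet_Iic fun t _ => hg_nonneg t
  have hΦ_add : ∀ x, Φ x + Φ (-x) = 1 := by
    intro x
    have h1 : Φ (-x) = ∫ t in Ioi x, g t := by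
      rw [hΦ]
      have : (∫ t in Iic x, g (-t)) = ∫ t in Ioi (-x), g t := integral_comp_neg_Iic x g
      have heven : ∀ t, g (-t) = g t := by intro t; simp [hgdef]
      calc (∫ t in Iic (-x), g t) = ∫ t in Iic (-x), g (-t) := by
            simp_rw [heven]
        _ = ∫ t in Ioi x, g t := by
            rw [integral_comp_neg_Iic (-x) g, neg_neg]
    rw [hΦ x, h1]
    rw [intervalIntegral.integral_Iic_add_Ioi hg_int.integrableOn hg_int.integrableOn, hg_total]
  have hΦ_le : ∀ x, Φ x ≤ 1 := by
    intro x
    have := hΦ_add x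
    have := hΦ_nonneg (-x)
    linarith
  have hΦ_mono : Monotone Φ := by
    intro x y hxy
    rw [hΦ x, hΦ y]
    exact setIntegral_mono_set hg_int.integrableOn
      (Filter.Eventually.of_forall fun t => hg_nonneg t)
      (HasSubset.Subset.eventuallyLE (Iic_subset_Iic.2 hxy))
  have hΦ_meas : Measurable Φ := hΦ_mono.measurable
  -- φ₂ facts
  have hφ₂_nonneg : ∀ z, 0 ≤ φ₂ z := by
    intro z; rw [hφ₂]; positivity
  have hφ₂_symm : ∀ z : ℝ × ℝ, φ₂ (z.2, z.1) = φ₂ z := by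
    intro z; rw [hφ₂, hφ₂]; ring_nf
  have hφ₂_cont : Continuous φ₂ := by
    have : φ₂ = fun z : ℝ × ℝ => (2 * π * Real.sqrt s)⁻¹ *
        Real.exp (-(z.1 ^ 2 - 2 * ρ * z.1 * z.2 + z.2 ^ 2) / (2 * s)) := funext hφ₂
    rw [this]; fun_prop
  -- integrability of φ₂
  set b : ℝ := (1 - |ρ|) / (2 * s) with hbdef
  have hb : 0 < b := by
    apply div_pos (by linarith) (by linarith)
  have hφ₂_int : Integrable φ₂ := by
    have hbound : Integrable (fun z : ℝ × ℝ => c * (Real.exp (-b * z.1 ^ 2) *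
        Real.exp (-b * z.2 ^ 2))) := by
      rw [Measure.volume_eq_prod]
      exact ((integrable_exp_neg_mul_sq hb).mul_prod (integrable_exp_neg_mul_sq hb)).const_mul c
    refine hbound.mono' hφ₂_cont.aestronglyMeasurable ?_
    refine Filter.Eventually.of_forall fun z => ?_
    rw [Real.norm_of_nonneg (hφ₂_nonneg z), hφ₂, ← Real.exp_add]
    apply mul_le_mul_of_nonneg_left _ hc.le
    apply Real.exp_le_exp.2
    have h2 : 2 * ρ * z.1 * z.2 ≤ |ρ| * (z.1 ^ 2 + z.2 ^ 2) := by
      have h3 : 2 * |ρ| * |z.1| * |z.2| ≤ |ρ| * (z.1 ^ 2 + z.2 ^ 2) := by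
        nlinarith [sq_nonneg (|z.1| - |z.2|), abs_nonneg ρ, sq_abs z.1, sq_abs z.2]
      calc 2 * ρ * z.1 * z.2 ≤ |2 * ρ * z.1 * z.2| := le_abs_self _
        _ = 2 * |ρ| * |z.1| * |z.2| := by
            rw [abs_mul, abs_mul, abs_mul]; simp [abs_of_nonneg]
        _ ≤ |ρ| * (z.1 ^ 2 + z.2 ^ 2) := h3
    have hq : (1 - |ρ|) * (z.1 ^ 2 + z.2 ^ 2) ≤ z.1 ^ 2 - 2 * ρ * z.1 * z.2 + z.2 ^ 2 := by
      nlinarith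
    have h2s : (0:ℝ) < 2 * s := by linarith
    have heq : -b * z.1 ^ 2 + -b * z.2 ^ 2 = -((1 - |ρ|) * (z.1 ^ 2 + z.2 ^ 2)) / (2 * s) := by
      rw [hbdef]; field_simp; ring
    rw [heq, div_le_div_iff_of_pos_right h2s]
    linarith
  -- total integral of φ₂ is 1
  have hφ₂_total : ∫ z : ℝ × ℝ, φ₂ z = 1 := by
    rw [Measure.volume_eq_prod] at hφ₂_int ⊢
    rw [integral_prod φ₂ hφ₂_int]
    have hinner : ∀ x : ℝ, (∫ y, φ₂ (x, y)) = c * Real.sqrt (2 * π * s) * Real.exp (-x ^ 2 / 2) := by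
      intro x
      have hsplit : ∀ y : ℝ, φ₂ (x, y) =
          (c * Real.exp (-x ^ 2 / 2)) * Real.exp (-(2 * s)⁻¹ * ((y - ρ * x) ^ 2)) := by
        intro y
        rw [hφ₂]
        conv_rhs => rw [mul_assoc, ← Real.exp_add]
        congr 1
        field_simp
        rw [hsdef]
        field_simp
        ring
      simp_rw [hsplit]
      rw [integral_const_mul]
      have := integral_sub_right_eq_self (μ := volume)
        (fun u : ℝ => Real.exp (-(2 * s)⁻¹ * u ^ 2)) (ρ * x)
      rw [this, integral_gaussian]
      rw [show π / (2 * s)⁻¹ = 2 * π * s by field_simp]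
      ring
    simp_rw [hinner]
    rw [integral_const_mul]
    have : ∫ x : ℝ, Real.exp (-x ^ 2 / 2) = Real.sqrt (2 * π) := by
      have h1 : ∫ x : ℝ, Real.exp (-(2⁻¹:ℝ) * x ^ 2) = Real.sqrt (π / 2⁻¹) :=
        integral_gaussian (2⁻¹ : ℝ)
      rw [show π / 2⁻¹ = 2 * π by ring] at h1
      rw [← h1]
      congr 1; funext x; ring_nf
    rw [this, hcdef]
    rw [mul_assoc, ← Real.sqrt_mul (by positivity : (0:ℝ) ≤ 2 * π * s)]
    rw [show 2 * π * s * (2 * π) = (2 * π) ^ 2 * s by ring,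
      Real.sqrt_mul (by positivity) s, Real.sqrt_sq (by positivity : (0:ℝ) ≤ 2 * π)]
    exact inv_mul_cancel₀ (by positivity)
  -- the integrand and its swap
  set f : ℝ × ℝ → ℝ := fun z => 2 * φ₂ z * Φ (α * (z.1 ^ 2 - z.2 ^ 2)) with hfdef
  have hf_meas : AEStronglyMeasurable f := by
    apply AEStronglyMeasurable.mul
    · exact (continuous_const.mul hφ₂_cont).aestronglyMeasurable
    · exact (hΦ_meas.comp (by fun_prop :
        Measurable fun z : ℝ × ℝ => α * (z.1 ^ 2 - z.2 ^ 2))).aestronglyMeasurable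
  have hf_int : Integrable f := by
    refine (hφ₂_int.const_mul 2).mono' hf_meas ?_
    refine Filter.Eventually.of_forall fun z => ?_
    simp only [hfdef]
    rw [Real.norm_of_nonneg (by
      have := hΦ_nonneg (α * (z.1 ^ 2 - z.2 ^ 2)); have := hφ₂_nonneg z; positivity)]
    have h1 := hΦ_le (α * (z.1 ^ 2 - z.2 ^ 2))
    have h2 := hΦ_nonneg (α * (z.1 ^ 2 - z.2 ^ 2))
    have h3 := hφ₂_nonneg z
    nlinarith [mul_nonneg h3 (sub_nonneg.2 h1)]
  have hswap_int : Integrable (fun z : ℝ × ℝ => f (z.2, z.1)) := by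
    rw [Measure.volume_eq_prod] at hf_int ⊢
    exact hf_int.swap
  have hswap_eq : ∫ z : ℝ × ℝ, f (z.2, z.1) = ∫ z : ℝ × ℝ, f z := by
    rw [Measure.volume_eq_prod]
    exact integral_prod_swap f
  have hsum : ∀ z : ℝ × ℝ, f z + f (z.2, z.1) = 2 * φ₂ z := by
    intro z
    simp only [hfdef]
    rw [hφ₂_symm z]
    have : α * (z.2 ^ 2 - z.1 ^ 2) = -(α * (z.1 ^ 2 - z.2 ^ 2)) := by ring
    rw [this]
    linear_combination 2 * φ₂ z * hΦ_add (α * (z.1 ^ 2 - z.2 ^ 2))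
  have key : (∫ z : ℝ × ℝ, f z) + ∫ z : ℝ × ℝ, f z = 2 := by
    nth_rewrite 2 [← hswap_eq]
    rw [← integral_add hf_int hswap_int]
    simp_rw [hsum]
    rw [integral_const_mul, hφ₂_total]
    norm_num
  have : ∫ z : ℝ × ℝ, f z = 1 := by linarith
  exact this
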